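/- Let A = C^∞(ℝ⁴, ℂ) with global coordinates (t, x¹, x², x³), let X_1 = ∂_t and X_2 = Σ_{j=1}^{3} x^j ∂_j, and let Θ = [[0,1],[−1,0]]. With the associated twist star product ⋆ on A[[λ]], the coordinate functions satisfy the κ-Minkowski relations: t ⋆ x^j − x^j ⋆ t = iλ · x^j for j = 1, 2, 3, and x^i ⋆ x^j − x^j ⋆ x^i = 0 for all i, j (indeed x^i ⋆ x^j = x^i x^j exactly, with no higher-order corrections). -/

import Mathlib

open scoped BigOperators

noncomputable section

/-- Iterated application of the vector fields `X` along the multi-index `α`. -/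
def derivSeq {A : Type*} {m : ℕ} (X : Fin m → A → A) :
    (n : ℕ) → (Fin n → Fin m) → A → A
  | 0, _, f => f
  | n + 1, α, f => X (α 0) (derivSeq X n (fun i => α i.succ) f)

/-- The `λⁿ`-coefficient bidifferential operator of the twist star product. -/
def twistCoeff {A : Type*} [CommRing A] [Algebra ℂ A] {m : ℕ}
    (X : Fin m → A → A) (Θ : Fin m → Fin m → ℝ) (n : ℕ) (f g : A) : A :=
  (((n.factorial : ℂ))⁻¹ * (Complex.I / 2) ^ n) •
    ∑ α : Fin n → Fin m, ∑ β : Fin n → Fin m,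
      (((∏ t, Θ (α t) (β t) : ℝ) : ℂ)) • (derivSeq X n α f * derivSeq X n β g)

/-- The twist star product on the module `A[[λ]]` of formal power series over `A`. -/
def twistStar {A : Type*} [CommRing A] [Algebra ℂ A] {m : ℕ}
    (X : Fin m → A → A) (Θ : Fin m → Fin m → ℝ) (f g : PowerSeries A) : PowerSeries A :=
  PowerSeries.mk fun n =>
    ∑ p ∈ Finset.HasAntidiagonal.antidiagonal n, ∑ q ∈ Finset.HasAntidiagonal.antidiagonal p.2,
      twistCoeff X Θ p.1 (PowerSeries.coeff q.1 f) (PowerSeries.coeff q.2 g)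

/-- Functions on `ℝ⁴` with coordinates `x⁰ = t, x¹, x², x³`. -/
abbrev MinkFun : Type := (Fin 4 → ℝ) → ℂ

/-- The partial derivative `∂_μ` on functions on `ℝ⁴`. -/
def pderiv4 (μ : Fin 4) (f : MinkFun) : MinkFun :=
  fun p => deriv (fun s => f (Function.update p μ s)) (p μ)

/-- The coordinate function `x^μ`. -/
def coord4 (μ : Fin 4) : MinkFun := fun p => (p μ : ℂ)

/-- The vector fields `X₁ = ∂_t` and `X₂ = Σ_{j=1}^{3} x^j ∂_j` on `ℝ⁴`. -/
def kappaX : Fin 2 → MinkFun → MinkFun :=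
  ![fun f => pderiv4 0 f,
    fun f p => ∑ j : Fin 3, (p j.succ : ℂ) * pderiv4 j.succ f p]

/-- The antisymmetric matrix `Θ = [[0,1],[−1,0]]`. -/
def theta2 : Fin 2 → Fin 2 → ℝ := ![![0, 1], ![-1, 0]]

open PowerSeries

lemma deriv_coe_real (x : ℝ) : deriv (fun s : ℝ => (s:ℂ)) x = 1 := by
  have h := (Complex.ofRealCLM.hasDerivAt (x := x)).deriv
  rw [show (fun s : ℝ => (s:ℂ)) = ⇑Complex.ofRealCLM from rfl, h]
  simp

lemma pderiv4_const (c : ℂ) (μ : Fin 4) : pderiv4 μ (fun _ => c) = 0 := by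
  funext p; simp [pderiv4]

lemma pderiv4_coord_self (μ : Fin 4) : pderiv4 μ (coord4 μ) = fun _ => 1 := by
  funext p
  simp only [pderiv4, coord4, Function.update_self]
  exact deriv_coe_real _

lemma pderiv4_coord_ne {ν μ : Fin 4} (h : ν ≠ μ) : pderiv4 ν (coord4 μ) = 0 := by
  funext p
  simp [pderiv4, coord4, Function.update_of_ne (Ne.symm h)]

lemma kappaX_zero_def (f : MinkFun) : kappaX 0 f = pderiv4 0 f := rfl

lemma kappaX_one_def (f : MinkFun) :
    kappaX 1 f = fun p => ∑ j : Fin 3, ((p j.succ : ℂ)) * pderiv4 j.succ f p := rfl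

lemma kappaX_apply_const (k : Fin 2) (c : ℂ) : kappaX k (fun _ => c) = 0 := by
  have h0 : k = 0 ∨ k = 1 := by omega
  rcases h0 with h0 | h0 <;> subst h0
  · rw [kappaX_zero_def]; exact pderiv4_const c 0
  · rw [kappaX_one_def]
    funext p
    simp [pderiv4_const]

lemma kappaX_apply_zero (k : Fin 2) : kappaX k (0 : MinkFun) = 0 := by
  have : (0 : MinkFun) = fun _ => (0:ℂ) := rfl
  rw [this]; exact kappaX_apply_const k 0

lemma kappaX_zero_coord_zero : kappaX 0 (coord4 0) = fun _ => 1 := by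
  rw [kappaX_zero_def]; exact pderiv4_coord_self 0

lemma kappaX_zero_coord {j : Fin 4} (hj : j ≠ 0) : kappaX 0 (coord4 j) = 0 := by
  rw [kappaX_zero_def]; exact pderiv4_coord_ne (Ne.symm hj)

lemma kappaX_one_coord_zero : kappaX 1 (coord4 0) = 0 := by
  rw [kappaX_one_def]
  funext p
  show ∑ j : Fin 3, ((p j.succ : ℂ)) * pderiv4 j.succ (coord4 0) p = 0
  apply Finset.sum_eq_zero
  intro i _
  rw [pderiv4_coord_ne (Fin.succ_ne_zero i)]
  simp

lemma kappaX_one_coord {j : Fin 4} (hj : j ≠ 0) : kappaX 1 (coord4 j) = coord4 j := by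
  obtain ⟨i, rfl⟩ := Fin.eq_succ_of_ne_zero hj
  rw [kappaX_one_def]
  funext p
  show ∑ k : Fin 3, ((p k.succ : ℂ)) * pderiv4 k.succ (coord4 i.succ) p = coord4 i.succ p
  rw [Finset.sum_eq_single i]
  · rw [pderiv4_coord_self]; simp [coord4]
  · intro b _ hb
    rw [pderiv4_coord_ne (fun h => hb (Fin.succ_injective _ h))]
    simp
  · simp

lemma derivSeq_zero_fn : ∀ (n : ℕ) (α : Fin n → Fin 2), derivSeq kappaX n α (0 : MinkFun) = 0
  | 0, _ => rfl
  | n + 1, α => by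
    show kappaX (α 0) (derivSeq kappaX n (fun i => α i.succ) 0) = 0
    rw [derivSeq_zero_fn n, kappaX_apply_zero]

lemma derivSeq_coord {j : Fin 4} (hj : j ≠ 0) :
    ∀ (n : ℕ) (α : Fin n → Fin 2),
      derivSeq kappaX n α (coord4 j) = if ∀ t, α t = 1 then coord4 j else 0
  | 0, α => by simp [derivSeq]
  | n + 1, α => by
    show kappaX (α 0) (derivSeq kappaX n (fun i => α i.succ) (coord4 j)) = _
    rw [derivSeq_coord hj n]
    have hcond : (∀ t : Fin (n+1), α t = 1) ↔ (α 0 = 1 ∧ ∀ t : Fin n, α t.succ = 1) :=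
      Fin.forall_fin_succ
    by_cases h : ∀ t : Fin n, α t.succ = 1
    · rw [if_pos h]
      have h0 : α 0 = 0 ∨ α 0 = 1 := by omega
      rcases h0 with h0 | h0
      · rw [h0, kappaX_zero_coord hj, if_neg (fun hc => by simp [hc 0] at h0)]
      · rw [h0, kappaX_one_coord hj, if_pos (hcond.mpr ⟨h0, h⟩)]
    · rw [if_neg h, kappaX_apply_zero, if_neg (fun hc => h (hcond.mp hc).2)]

lemma derivSeq_coord_zero :
    ∀ (n : ℕ) (α : Fin (n+1) → Fin 2),
      derivSeq kappaX (n+1) α (coord4 0) =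
        (if n = 0 ∧ α 0 = 0 then (fun _ => (1:ℂ)) else 0 : MinkFun)
  | 0, α => by
    show kappaX (α 0) (coord4 0) = _
    have h0 : α 0 = 0 ∨ α 0 = 1 := by omega
    rcases h0 with h0 | h0
    · rw [h0, kappaX_zero_coord_zero, if_pos ⟨rfl, rfl⟩]
    · rw [h0, kappaX_one_coord_zero, if_neg (fun hc => absurd hc.2 (by decide))]
  | n + 1, α => by
    show kappaX (α 0) (derivSeq kappaX (n+1) (fun i => α i.succ) (coord4 0)) = _
    rw [derivSeq_coord_zero n]
    by_cases h : n = 0 ∧ (fun i : Fin (n+1) => α i.succ) 0 = 0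
    · rw [if_pos h, kappaX_apply_const, if_neg (fun hc => Nat.succ_ne_zero n hc.1)]
    · rw [if_neg h, kappaX_apply_zero, if_neg (fun hc => Nat.succ_ne_zero n hc.1)]

lemma twistCoeff_zero' (f g : MinkFun) : twistCoeff kappaX theta2 0 f g = f * g := by
  simp [twistCoeff, derivSeq]

lemma twistCoeff_eq_zero {A : Type*} [CommRing A] [Algebra ℂ A] {m : ℕ}
    (X : Fin m → A → A) (Θ : Fin m → Fin m → ℝ) (n : ℕ) (f g : A)
    (h : ∀ α β : Fin n → Fin m,
      (((∏ t, Θ (α t) (β t) : ℝ) : ℂ)) • (derivSeq X n α f * derivSeq X n β g) = 0) :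
    twistCoeff X Θ n f g = 0 := by
  unfold twistCoeff
  rw [Finset.sum_eq_zero fun α _ => Finset.sum_eq_zero fun β _ => h α β, smul_zero]

lemma sum_fn1 {M : Type*} [AddCommMonoid M] (F : (Fin 1 → Fin 2) → M) :
    ∑ α : Fin 1 → Fin 2, F α = F (fun _ => 0) + F (fun _ => 1) := by
  rw [← Equiv.sum_comp (Equiv.funUnique (Fin 1) (Fin 2)).symm, Fin.sum_univ_two]
  rfl

lemma twistCoeff_spatial {i j : Fin 4} (hi : i ≠ 0) (hj : j ≠ 0) (k : ℕ) :
    twistCoeff kappaX theta2 (k+1) (coord4 i) (coord4 j) = 0 := by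
  apply twistCoeff_eq_zero
  intro α β
  rw [derivSeq_coord hi, derivSeq_coord hj]
  by_cases hα : ∀ t, α t = 1
  · by_cases hβ : ∀ t, β t = 1
    · have : theta2 (α 0) (β 0) = 0 := by rw [hα 0, hβ 0]; rfl
      rw [Finset.prod_eq_zero (Finset.mem_univ 0) this]
      simp
    · simp [hβ]
  · simp [hα]

lemma twistCoeff_zero_left (n : ℕ) (g : MinkFun) :
    twistCoeff kappaX theta2 n 0 g = 0 := by
  apply twistCoeff_eq_zero
  intro α β
  rw [derivSeq_zero_fn]
  simp

lemma twistCoeff_zero_right (n : ℕ) (f : MinkFun) :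
    twistCoeff kappaX theta2 n f 0 = 0 := by
  apply twistCoeff_eq_zero
  intro α β
  rw [derivSeq_zero_fn n β]
  simp

lemma twistCoeff_time_left {j : Fin 4} (hj : j ≠ 0) (k : ℕ) :
    twistCoeff kappaX theta2 (k+1) (coord4 0) (coord4 j) =
      if k = 0 then (Complex.I / 2) • coord4 j else 0 := by
  rcases Nat.eq_zero_or_pos k with hk | hk
  · subst hk
    rw [if_pos rfl]
    unfold twistCoeff
    rw [sum_fn1]
    rw [sum_fn1 (F := fun β => _), sum_fn1 (F := fun β => _)]
    rw [derivSeq_coord_zero, derivSeq_coord_zero,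
      derivSeq_coord hj, derivSeq_coord hj]
    norm_num [theta2, Fin.prod_univ_one]
    rw [show ((fun _ => 1 : MinkFun)) = (1 : MinkFun) from rfl, one_mul]
  · rw [if_neg hk.ne']
    apply twistCoeff_eq_zero
    intro α β
    rw [derivSeq_coord_zero]
    rw [if_neg (fun hc => hk.ne' hc.1)]
    simp

lemma twistCoeff_time_right {j : Fin 4} (hj : j ≠ 0) (k : ℕ) :
    twistCoeff kappaX theta2 (k+1) (coord4 j) (coord4 0) =
      if k = 0 then (-(Complex.I / 2)) • coord4 j else 0 := by
  rcases Nat.eq_zero_or_pos k with hk | hk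
  · subst hk
    rw [if_pos rfl]
    unfold twistCoeff
    rw [sum_fn1]
    rw [sum_fn1 (F := fun β => _), sum_fn1 (F := fun β => _)]
    rw [derivSeq_coord_zero, derivSeq_coord_zero,
      derivSeq_coord hj, derivSeq_coord hj]
    norm_num [theta2, Fin.prod_univ_one]
    rw [show ((fun _ => 1 : MinkFun)) = (1 : MinkFun) from rfl, mul_one]
  · rw [if_neg hk.ne']
    apply twistCoeff_eq_zero
    intro α β
    rw [derivSeq_coord_zero (α := β)]
    rw [if_neg (fun hc => hk.ne' hc.1)]
    simp

lemma twistStar_C_C (f g : MinkFun) :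
    twistStar kappaX theta2 (PowerSeries.C f) (PowerSeries.C g) =
      PowerSeries.mk fun n => twistCoeff kappaX theta2 n f g := by
  ext n
  simp only [twistStar, coeff_mk]
  rw [Finset.sum_eq_single (n, 0)]
  · rw [Finset.Nat.antidiagonal_zero, Finset.sum_singleton]
    simp
  · intro p hp hne
    have hp2 : p.2 ≠ 0 := by
      intro h
      apply hne
      have h' := Finset.HasAntidiagonal.mem_antidiagonal.mp hp
      have : p.1 = n := by omega
      exact Prod.ext this h
    apply Finset.sum_eq_zero
    intro q hq
    have hq' := Finset.HasAntidiagonal.mem_antidiagonal.mp hq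
    by_cases h1 : q.1 = 0
    · have h2 : q.2 ≠ 0 := by omega
      rw [show (PowerSeries.coeff q.2) (PowerSeries.C g) = 0 by
        rw [PowerSeries.coeff_C, if_neg h2], twistCoeff_zero_right]
    · rw [show (PowerSeries.coeff q.1) (PowerSeries.C f) = 0 by
        rw [PowerSeries.coeff_C, if_neg h1], twistCoeff_zero_left]
  · intro h
    exact absurd (Finset.HasAntidiagonal.mem_antidiagonal.mpr (by simp)) h

/-- With the twist built from `X₁ = ∂_t` and `X₂ = x^j ∂_j` on Minkowski
space `ℝ⁴`, the coordinate functions satisfy the κ-Minkowski relations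
`t ⋆ x^j − x^j ⋆ t = iλ x^j` and `x^i ⋆ x^j = x^i x^j` exactly (in particular the spatial
coordinates ⋆-commute). -/
theorem kappa_minkowski_relations :
    (∀ j : Fin 4, j ≠ 0 →
      twistStar kappaX theta2 (PowerSeries.C (coord4 0))
          (PowerSeries.C (coord4 j)) -
        twistStar kappaX theta2 (PowerSeries.C (coord4 j))
          (PowerSeries.C (coord4 0)) =
        PowerSeries.X * PowerSeries.C (Complex.I • coord4 j)) ∧
    (∀ i j : Fin 4, i ≠ 0 → j ≠ 0 →
      twistStar kappaX theta2 (PowerSeries.C (coord4 i))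
          (PowerSeries.C (coord4 j)) =
        PowerSeries.C (coord4 i * coord4 j)) ∧
    (∀ i j : Fin 4, i ≠ 0 → j ≠ 0 →
      twistStar kappaX theta2 (PowerSeries.C (coord4 i))
          (PowerSeries.C (coord4 j)) -
        twistStar kappaX theta2 (PowerSeries.C (coord4 j))
          (PowerSeries.C (coord4 i)) = 0) := by
  constructor
  · intro j hj
    rw [twistStar_C_C, twistStar_C_C]
    ext n
    rw [map_sub, coeff_mk, coeff_mk]
    match n with
    | 0 =>
      rw [twistCoeff_zero', twistCoeff_zero']
      have : (PowerSeries.coeff 0)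
          (PowerSeries.X * PowerSeries.C (Complex.I • coord4 j)) = 0 := by
        simp
      rw [this, mul_comm, sub_self]
    | 1 =>
      rw [twistCoeff_time_left hj 0, twistCoeff_time_right hj 0]
      rw [show (PowerSeries.coeff 1 : MinkFun⟦X⟧ →ₗ[MinkFun] MinkFun) = PowerSeries.coeff (0 + 1) from rfl, PowerSeries.coeff_succ_X_mul, PowerSeries.coeff_C]
      simp only [if_true, if_pos rfl]
      rw [← sub_smul]
      norm_num
    | (k + 2) =>
      rw [show k + 2 = (k+1) + 1 from rfl]
      rw [twistCoeff_time_left hj (k+1), twistCoeff_time_right hj (k+1)]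
      rw [PowerSeries.coeff_succ_X_mul, PowerSeries.coeff_C]
      simp
  · constructor
    · intro i j hi hj
      rw [twistStar_C_C]
      ext n
      rw [coeff_mk, PowerSeries.coeff_C]
      match n with
      | 0 => rw [twistCoeff_zero', if_pos rfl]
      | (k + 1) => rw [twistCoeff_spatial hi hj, if_neg (Nat.succ_ne_zero k)]
    · intro i j hi hj
      have h1 := (fun a b ha hb =>
        (by
          rw [twistStar_C_C]
          ext n
          rw [coeff_mk, PowerSeries.coeff_C]
          match n with
          | 0 => rw [twistCoeff_zero', if_pos rfl]
          | (k + 1) => rw [twistCoeff_spatial ha hb, if_neg (Nat.succ_ne_zero k)] :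
          twistStar kappaX theta2 (PowerSeries.C (coord4 a))
            (PowerSeries.C (coord4 b)) =
          PowerSeries.C (coord4 a * coord4 b)))
      rw [h1 i j hi hj, h1 j i hj hi, mul_comm, sub_self]
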